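/- arXiv:1202.2209 — 9 statements merged into one kernel-verified Lean document; each statement's English description precedes it below -/
import Mathlib

section
/- There exists a social network (with 6 agents, 3 of them source nodes, product set {t_1,t_2,t_3}, constant thresholds θ and weights w_1 < w_2 with θ < w_1) whose associated social network game has no Nash equilibrium. -/
open Finset

/-- A social network: a finite weighted directed graph together with product
assignments and thresholds.  `nbr i` is the set `N(i)` of in-neighbours of `i`. -/
structure SN (V P : Type) [Fintype V] [DecidableEq V] [DecidableEq P] where
  nbr : V → Finset V
  w : V → V → ℝ
  prod : V → Finset P
  θ : V → P → ℝ
  no_self : ∀ i, i ∉ nbr i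
  w_nonneg : ∀ i j, 0 ≤ w i j
  w_le_one : ∀ i j, w i j ≤ 1
  sum_w_le_one : ∀ i, (nbr i).Nonempty → ∑ j ∈ nbr i, w j i ≤ 1
  prod_nonempty : ∀ i, (prod i).Nonempty
  θ_pos : ∀ i t, 0 < θ i t
  θ_le_one : ∀ i t, θ i t ≤ 1

variable {V P : Type} [Fintype V] [DecidableEq V] [DecidableEq P]

/-- A source node: a node with no incoming edges. -/
def SN.isSource (S : SN V P) (i : V) : Prop := S.nbr i = ∅

/-- The payoff of player `i` in the joint strategy `s` (`none` is the null strategy `t₀`,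
`c0 > 0` is the constant payoff of source nodes adopting a product). -/
def SN.payoff (S : SN V P) (c0 : ℝ) (s : V → Option P) (i : V) : ℝ :=
  match s i with
  | none => 0
  | some t =>
      if S.nbr i = ∅ then c0
      else (∑ j ∈ (S.nbr i).filter (fun j => s j = some t), S.w j i) - S.θ i t

/-- A joint strategy is valid if every player only uses products from his product set. -/
def SN.valid (S : SN V P) (s : V → Option P) : Prop :=
  ∀ i t, s i = some t → t ∈ S.prod i

/-- The strategy `a` belongs to the strategy set `P(i) ∪ {t₀}` of player `i`. -/
def SN.allowed (S : SN V P) (i : V) (a : Option P) : Prop :=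
  ∀ t, a = some t → t ∈ S.prod i

/-- (Pure) Nash equilibrium of the social network game. -/
def SN.NE (S : SN V P) (c0 : ℝ) (s : V → Option P) : Prop :=
  S.valid s ∧ ∀ i a, S.allowed i a →
    S.payoff c0 (Function.update s i a) i ≤ S.payoff c0 s i

def myNbr : Fin 6 → Finset (Fin 6)
  | 0 => {2,3} | 1 => {0,4} | 2 => {1,5} | 3 => ∅ | 4 => ∅ | 5 => ∅

noncomputable def myW : Fin 6 → Fin 6 → ℝ := fun i j =>
  if (i = 2 ∧ j = 0) ∨ (i = 0 ∧ j = 1) ∨ (i = 1 ∧ j = 2) then 1/2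
  else if (i = 3 ∧ j = 0) ∨ (i = 4 ∧ j = 1) ∨ (i = 5 ∧ j = 2) then 1/4
  else 0

def myProd : Fin 6 → Finset (Fin 3)
  | 0 => {0,1} | 1 => {0,2} | 2 => {1,2} | 3 => {0} | 4 => {2} | 5 => {1}

noncomputable def mySN : SN (Fin 6) (Fin 3) where
  nbr := myNbr
  w := myW
  prod := myProd
  θ := fun _ _ => 1/8
  no_self := by decide
  w_nonneg := by intro i j; unfold myW; split_ifs <;> norm_num
  w_le_one := by intro i j; unfold myW; split_ifs <;> norm_num
  sum_w_le_one := by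
    intro i _
    fin_cases i <;>
      simp [myNbr, myW, Finset.sum_insert, Finset.sum_singleton] <;> norm_num
  prod_nonempty := by decide
  θ_pos := by intro i t; norm_num
  θ_le_one := by intro i t; norm_num

lemma pay0 (s : Fin 6 → Option (Fin 3)) (t : Fin 3) (h : s 0 = some t) :
    mySN.payoff 1 s 0
      = (if s 2 = some t then (1:ℝ)/2 else 0) + (if s 3 = some t then 1/4 else 0) - 1/8 := by
  rw [SN.payoff, h]
  show (if mySN.nbr 0 = ∅ then (1:ℝ)
      else (∑ j ∈ (mySN.nbr 0).filter (fun j => s j = some t), mySN.w j 0) - mySN.θ 0 t) = _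
  rw [if_neg (show ¬ mySN.nbr 0 = ∅ by decide),
    show mySN.nbr 0 = insert 2 {3} from rfl, Finset.filter_insert, Finset.filter_singleton,
    show mySN.θ 0 t = 1/8 from rfl]
  split_ifs <;>
    simp (config := { decide := true }) [Finset.sum_insert, Finset.sum_singleton, mySN, myW]

lemma pay1 (s : Fin 6 → Option (Fin 3)) (t : Fin 3) (h : s 1 = some t) :
    mySN.payoff 1 s 1
      = (if s 0 = some t then (1:ℝ)/2 else 0) + (if s 4 = some t then 1/4 else 0) - 1/8 := by
  rw [SN.payoff, h]
  show (if mySN.nbr 1 = ∅ then (1:ℝ)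
      else (∑ j ∈ (mySN.nbr 1).filter (fun j => s j = some t), mySN.w j 1) - mySN.θ 1 t) = _
  rw [if_neg (show ¬ mySN.nbr 1 = ∅ by decide),
    show mySN.nbr 1 = insert 0 {4} from rfl, Finset.filter_insert, Finset.filter_singleton,
    show mySN.θ 1 t = 1/8 from rfl]
  split_ifs <;>
    simp (config := { decide := true }) [Finset.sum_insert, Finset.sum_singleton, mySN, myW]

lemma pay2 (s : Fin 6 → Option (Fin 3)) (t : Fin 3) (h : s 2 = some t) :
    mySN.payoff 1 s 2
      = (if s 1 = some t then (1:ℝ)/2 else 0) + (if s 5 = some t then 1/4 else 0) - 1/8 := by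
  rw [SN.payoff, h]
  show (if mySN.nbr 2 = ∅ then (1:ℝ)
      else (∑ j ∈ (mySN.nbr 2).filter (fun j => s j = some t), mySN.w j 2) - mySN.θ 2 t) = _
  rw [if_neg (show ¬ mySN.nbr 2 = ∅ by decide),
    show mySN.nbr 2 = insert 1 {5} from rfl, Finset.filter_insert, Finset.filter_singleton,
    show mySN.θ 2 t = 1/8 from rfl]
  split_ifs <;>
    simp (config := { decide := true }) [Finset.sum_insert, Finset.sum_singleton, mySN, myW]

lemma no_NE : ¬ ∃ s, mySN.NE 1 s := by
  rintro ⟨s, hv, hne⟩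
  have key : ∀ (i : Fin 6) (t : Fin 3), mySN.nbr i = ∅ → mySN.prod i = {t} →
      s i = some t := by
    intro i t hn hp
    have ha : mySN.allowed i (some t) := by
      intro u hu; injection hu with h; subst h; rw [hp]; exact mem_singleton_self t
    have H := hne i (some t) ha
    simp only [SN.payoff, Function.update_self, hn, if_pos rfl] at H
    rcases ht : s i with _ | u
    · rw [ht] at H; simp at H <;> norm_num at H
    · have := hv i u ht
      rw [hp, mem_singleton] at this
      exact congrArg some this
  have h3 : s 3 = some 0 := key 3 0 rfl rfl
  have h4 : s 4 = some 2 := key 4 2 rfl rfl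
  have h5 : s 5 = some 1 := key 5 1 rfl rfl
  have D0 : ∀ t : Fin 3, t ∈ myProd 0 →
      (if s 2 = some t then (1:ℝ)/2 else 0) + (if s 3 = some t then 1/4 else 0) - 1/8
        ≤ mySN.payoff 1 s 0 := by
    intro t ht
    have H := hne 0 (some t) (fun u hu => by injection hu with h; subst h; exact ht)
    rwa [pay0 _ t (Function.update_self 0 _ s),
      Function.update_of_ne (by decide), Function.update_of_ne (by decide)] at H
  have D1 : ∀ t : Fin 3, t ∈ myProd 1 →
      (if s 0 = some t then (1:ℝ)/2 else 0) + (if s 4 = some t then 1/4 else 0) - 1/8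
        ≤ mySN.payoff 1 s 1 := by
    intro t ht
    have H := hne 1 (some t) (fun u hu => by injection hu with h; subst h; exact ht)
    rwa [pay1 _ t (Function.update_self 1 _ s),
      Function.update_of_ne (by decide), Function.update_of_ne (by decide)] at H
  have D2 : ∀ t : Fin 3, t ∈ myProd 2 →
      (if s 1 = some t then (1:ℝ)/2 else 0) + (if s 5 = some t then 1/4 else 0) - 1/8
        ≤ mySN.payoff 1 s 2 := by
    intro t ht
    have H := hne 2 (some t) (fun u hu => by injection hu with h; subst h; exact ht)
    rwa [pay2 _ t (Function.update_self 2 _ s),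
      Function.update_of_ne (by decide), Function.update_of_ne (by decide)] at H
  -- best-response implications around the triangle
  have A : s 2 = some 1 → s 0 = some 1 := by
    intro h2
    have H := D0 1 (by decide)
    rw [h2, h3] at H
    rcases e0 : s 0 with _ | u
    · rw [SN.payoff, e0] at H; simp at H <;> norm_num at H
    · have hm := hv 0 u e0
      fin_cases u
      · rw [pay0 s 0 e0, h2, h3] at H; simp at H <;> norm_num at H
      · rfl
      · exact absurd hm (by decide)
  have B : s 2 = some 2 → s 0 = some 0 := by
    intro h2
    have H := D0 0 (by decide)
    rw [h2, h3] at H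
    rcases e0 : s 0 with _ | u
    · rw [SN.payoff, e0] at H; simp at H <;> norm_num at H
    · have hm := hv 0 u e0
      fin_cases u
      · rfl
      · rw [pay0 s 1 e0, h2, h3] at H; simp at H <;> norm_num at H
      · exact absurd hm (by decide)
  have C : s 0 = some 0 → s 1 = some 0 := by
    intro h0
    have H := D1 0 (by decide)
    rw [h0, h4] at H
    rcases e1 : s 1 with _ | u
    · rw [SN.payoff, e1] at H; simp at H <;> norm_num at H
    · have hm := hv 1 u e1
      fin_cases u
      · rfl
      · exact absurd hm (by decide)
      · rw [pay1 s 2 e1, h0, h4] at H; simp at H <;> norm_num at H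
  have Dd : s 0 = some 1 → s 1 = some 2 := by
    intro h0
    have H := D1 2 (by decide)
    rw [h0, h4] at H
    rcases e1 : s 1 with _ | u
    · rw [SN.payoff, e1] at H; simp at H <;> norm_num at H
    · have hm := hv 1 u e1
      fin_cases u
      · rw [pay1 s 0 e1, h0, h4] at H; simp at H <;> norm_num at H
      · exact absurd hm (by decide)
      · rfl
  have E : s 1 = some 0 → s 2 = some 1 := by
    intro h1
    have H := D2 1 (by decide)
    rw [h1, h5] at H
    rcases e2 : s 2 with _ | u
    · rw [SN.payoff, e2] at H; simp at H <;> norm_num at H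
    · have hm := hv 2 u e2
      fin_cases u
      · exact absurd hm (by decide)
      · rfl
      · rw [pay2 s 2 e2, h1, h5] at H; simp at H <;> norm_num at H
  have F : s 1 = some 2 → s 2 = some 2 := by
    intro h1
    have H := D2 2 (by decide)
    rw [h1, h5] at H
    rcases e2 : s 2 with _ | u
    · rw [SN.payoff, e2] at H; simp at H <;> norm_num at H
    · have hm := hv 2 u e2
      fin_cases u
      · exact absurd hm (by decide)
      · rw [pay2 s 1 e2, h1, h5] at H; simp at H <;> norm_num at H
      · rfl
  rcases e2 : s 2 with _ | u
  · have H := D2 1 (by decide)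
    rw [h5, SN.payoff, e2] at H
    rcases e1 : s 1 with _ | u
    · rw [e1] at H; simp at H <;> norm_num at H
    · rw [e1] at H
      rcases eq_or_ne u 1 with rfl | hu
      · rw [if_pos rfl, if_pos rfl] at H; simp at H <;> norm_num at H
      · rw [if_neg (by simpa using hu), if_pos rfl] at H
        simp at H <;> norm_num at H
  · have hm := hv 2 u e2
    fin_cases u
    · exact absurd hm (by decide)
    · have := F (Dd (A e2))
      rw [e2] at this; exact absurd this (by decide)
    · have := E (C (B e2))
      rw [e2] at this; exact absurd this (by decide)

/-- there is a social network with 6 agents (3 of them source nodes),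
product set {t₁,t₂,t₃}, constant thresholds θ and weights w₁ < w₂ with θ < w₁,
whose associated game has no Nash equilibrium.  Agents 0,1,2 form the directed
triangle 0→1→2→0 with weights w₂ and product sets {t₁,t₂}, {t₁,t₃}, {t₂,t₃};
agents 3,4,5 are source nodes with product sets {t₁}, {t₃}, {t₂} pointing with
weight w₁ to 0, 1 and 2 respectively (products: t₁ = 0, t₂ = 1, t₃ = 2). -/
theorem exists_network_without_NE :
    ∃ (S : SN (Fin 6) (Fin 3)) (c0 w₁ w₂ th : ℝ),
      0 < c0 ∧ 0 < th ∧ th < w₁ ∧ w₁ < w₂ ∧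
      -- thresholds are constant
      (∀ i t, S.θ i t = th) ∧
      -- the triangle
      S.nbr 0 = {2, 3} ∧ S.nbr 1 = {0, 4} ∧ S.nbr 2 = {1, 5} ∧
      -- the three source nodes
      S.nbr 3 = ∅ ∧ S.nbr 4 = ∅ ∧ S.nbr 5 = ∅ ∧
      -- weights
      S.w 2 0 = w₂ ∧ S.w 0 1 = w₂ ∧ S.w 1 2 = w₂ ∧
      S.w 3 0 = w₁ ∧ S.w 4 1 = w₁ ∧ S.w 5 2 = w₁ ∧
      -- product sets
      S.prod 0 = {0, 1} ∧ S.prod 1 = {0, 2} ∧ S.prod 2 = {1, 2} ∧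
      S.prod 3 = {0} ∧ S.prod 4 = {2} ∧ S.prod 5 = {1} ∧
      -- the associated game has no Nash equilibrium
      ¬ ∃ s, S.NE c0 s := by
  refine ⟨mySN, 1, 1/4, 1/2, 1/8, by norm_num, by norm_num, by norm_num, by norm_num,
    fun i t => rfl, rfl, rfl, rfl, rfl, rfl, rfl,
    by simp (config := { decide := true }) [mySN, myW] <;> norm_num, by simp (config := { decide := true }) [mySN, myW] <;> norm_num, by simp (config := { decide := true }) [mySN, myW] <;> norm_num,
    by simp (config := { decide := true }) [mySN, myW] <;> norm_num, by simp (config := { decide := true }) [mySN, myW] <;> norm_num, by simp (config := { decide := true }) [mySN, myW] <;> norm_num,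
    rfl, rfl, rfl, rfl, rfl, rfl, no_NE⟩
end

section
/- If the underlying graph of a social network is a directed acyclic graph, then the associated social network game has a non-trivial Nash equilibrium. -/
open Finset

variable {V P : Type} [Fintype V] [DecidableEq V] [DecidableEq P]

/-- value of product t for node i given neighbours play f -/
noncomputable def SN.uval (S : SN V P) (f : V → Option P) (i : V) (t : P) : ℝ :=
  (∑ j ∈ (S.nbr i).filter (fun j => f j = some t), S.w j i) - S.θ i t

/-- pay of action a for node i given others play f -/
noncomputable def SN.pay (S : SN V P) (c0 : ℝ) (f : V → Option P) (i : V) (a : Option P) : ℝ :=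
  match a with
  | none => 0
  | some t => if S.nbr i = ∅ then c0 else S.uval f i t

noncomputable def SN.br0 (S : SN V P) (i : V) (u : P → ℝ) : Option P :=
  if S.nbr i = ∅ then some (S.prod_nonempty i).choose
  else if 0 < u (Finset.exists_max_image (S.prod i) u (S.prod_nonempty i)).choose
    then some (Finset.exists_max_image (S.prod i) u (S.prod_nonempty i)).choose else none

noncomputable def SN.br (S : SN V P) (f : V → Option P) (i : V) : Option P :=
  S.br0 i (S.uval f i)

lemma SN.uval_congr (S : SN V P) {f g : V → Option P} {i : V}
    (h : ∀ j ∈ S.nbr i, f j = g j) : S.uval f i = S.uval g i := by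
  funext t
  unfold SN.uval
  congr 1
  apply Finset.sum_congr _ (fun _ _ => rfl)
  exact Finset.filter_congr (fun j hj => by rw [h j hj])

lemma SN.br_congr (S : SN V P) {f g : V → Option P} {i : V}
    (h : ∀ j ∈ S.nbr i, f j = g j) : S.br f i = S.br g i := by
  unfold SN.br
  rw [S.uval_congr h]

lemma SN.pay_eq_payoff (S : SN V P) (c0 : ℝ) (s : V → Option P) (i : V) :
    S.payoff c0 s i = S.pay c0 s i (s i) := by
  cases h : s i <;> simp [SN.payoff, SN.pay, SN.uval, h]

lemma SN.payoff_update (S : SN V P) (c0 : ℝ) (s : V → Option P) (i : V) (a : Option P) :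
    S.payoff c0 (Function.update s i a) i = S.pay c0 s i a := by
  cases a with
  | none => simp [SN.payoff, SN.pay]
  | some t =>
      simp only [SN.payoff, SN.pay, Function.update_self, SN.uval]
      split
      · rfl
      · congr 2
        apply Finset.filter_congr
        intro j hj
        have : j ≠ i := fun h => S.no_self i (h ▸ hj)
        rw [Function.update_of_ne this]

lemma SN.br_valid (S : SN V P) (f : V → Option P) (i : V) {t : P}
    (h : S.br f i = some t) : t ∈ S.prod i := by
  unfold SN.br SN.br0 at h
  split at h
  · simp only [Option.some.injEq] at h
    exact h ▸ (S.prod_nonempty i).choose_spec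
  · split at h
    · simp only [Option.some.injEq] at h
      exact h ▸ (Finset.exists_max_image (S.prod i) (S.uval f i) (S.prod_nonempty i)).choose_spec.1
    · exact absurd h (by simp)

lemma SN.br_opt (S : SN V P) (c0 : ℝ) (hc0 : 0 < c0) (f : V → Option P) (i : V)
    (a : Option P) (ha : S.allowed i a) :
    S.pay c0 f i a ≤ S.pay c0 f i (S.br f i) := by
  unfold SN.br SN.br0
  by_cases hs : S.nbr i = ∅
  · simp only [hs, if_true]
    cases a <;> simp [SN.pay, hs, hc0.le]
  · simp only [hs, if_false]
    obtain ⟨ht, hmax⟩ := (Finset.exists_max_image (S.prod i) (S.uval f i) (S.prod_nonempty i)).choose_spec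
    set t₀ := (Finset.exists_max_image (S.prod i) (S.uval f i) (S.prod_nonempty i)).choose
    by_cases hpos : 0 < S.uval f i t₀
    · simp only [hpos, if_true]
      cases a with
      | none => simpa [SN.pay, hs] using hpos.le
      | some t => simpa [SN.pay, hs] using hmax t (ha t rfl)
    · simp only [hpos, if_false]
      cases a with
      | none => simp [SN.pay]
      | some t =>
          simp only [SN.pay, hs, if_false]
          exact le_trans (hmax t (ha t rfl)) (not_lt.1 hpos)

/-- if the underlying graph of a social network is a DAG
(no directed cycles), then the associated game has a non-trivial Nash
equilibrium. -/
theorem exists_nontrivial_NE_of_dag [Nonempty V] (S : SN V P) (c0 : ℝ) (hc0 : 0 < c0)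
    (hdag : ∀ i : V, ¬ Relation.TransGen (fun j k => j ∈ S.nbr k) i i) :
    ∃ s, S.NE c0 s ∧ ∃ i, s i ≠ none := by
  classical
  set r : V → V → Prop := fun j k => j ∈ S.nbr k with hr
  have htrans : IsTrans V (Relation.TransGen r) := ⟨fun _ _ _ => Relation.TransGen.trans⟩
  have hirr : IsIrrefl V (Relation.TransGen r) := ⟨hdag⟩
  have hwfT : WellFounded (Relation.TransGen r) :=
    Finite.wellFounded_of_trans_of_irrefl _
  have hwf : WellFounded r :=
    Subrelation.wf (fun h => Relation.TransGen.single h) hwfT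
  -- the strategy profile built by best responses in topological order
  set s : V → Option P :=
    hwf.fix (fun i ih => S.br (fun j => if h : r j i then ih j h else none) i) with hs
  have hfix : ∀ i : V,
      s i = S.br (fun j => if h : r j i then s j else none) i := by
    intro i
    rw [hs]
    exact hwf.fix_eq _ i
  have hkey : ∀ i : V, s i = S.br s i := by
    intro i
    rw [hfix i]
    exact S.br_congr (fun j hj => by simp [hr, hj])
  refine ⟨s, ⟨?_, ?_⟩, ?_⟩
  · intro i t hit
    exact S.br_valid s i (hkey i ▸ hit)
  · intro i a ha
    rw [S.payoff_update, S.pay_eq_payoff, hkey i]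
    exact S.br_opt c0 hc0 s i a ha
  · obtain ⟨m, -, hm⟩ := hwf.has_min Set.univ ⟨Classical.arbitrary V, trivial⟩
    have hsrc : S.nbr m = ∅ := by
      rw [Finset.eq_empty_iff_forall_notMem]
      exact fun j hj => hm j trivial hj
    refine ⟨m, ?_⟩
    rw [hkey m]
    unfold SN.br SN.br0
    simp [hsrc]
end

section
/- Every social network game whose underlying graph is a directed acyclic graph has the finite improvement property: every improvement path is finite. -/
open Finset

variable {V P : Type} [Fintype V] [DecidableEq V] [DecidableEq P]

/-- One improvement step: some player deviates to a strategy from his strategy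
set that strictly increases his payoff. -/
def SN.ImpStep (S : SN V P) (c0 : ℝ) (s s' : V → Option P) : Prop :=
  ∃ i a, S.allowed i a ∧ a ≠ s i ∧ s' = Function.update s i a ∧
    S.payoff c0 s i < S.payoff c0 s' i

/-- The finite improvement property: every improvement path is finite, i.e. there
is no infinite sequence of improvement steps (starting from a valid joint strategy). -/
def SN.FIP (S : SN V P) (c0 : ℝ) : Prop :=
  ¬ ∃ ρ : ℕ → (V → Option P), S.valid (ρ 0) ∧ ∀ k, S.ImpStep c0 (ρ k) (ρ (k + 1))

/-- The payoff of `i` only depends on the strategies of `i` and his neighbours. -/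
lemma SN.payoff_congr (S : SN V P) (c0 : ℝ) {s s' : V → Option P} (i : V)
    (h0 : s i = s' i) (h : ∀ j ∈ S.nbr i, s j = s' j) :
    S.payoff c0 s i = S.payoff c0 s' i := by
  unfold SN.payoff
  rw [← h0]
  cases hsi : s i with
  | none => rfl
  | some t =>
    by_cases hne : S.nbr i = ∅
    · simp [hne]
    · simp only [hne, if_false]
      congr 1
      apply Finset.sum_congr _ (fun _ _ => rfl)
      apply Finset.filter_congr
      intro j hj
      rw [h j hj]


/-- every social network game whose underlying graph is a DAG has
the finite improvement property. -/
theorem fip_of_dag (S : SN V P) (c0 : ℝ) (hc0 : 0 < c0)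
    (hdag : ∀ i : V, ¬ Relation.TransGen (fun j k => j ∈ S.nbr k) i i) :
    S.FIP c0 := by
  rintro ⟨ρ, hvalid0, hstep⟩
  -- well-foundedness of the neighbour relation
  haveI hirr : IsIrrefl V (Relation.TransGen (fun j k => j ∈ S.nbr k)) := ⟨hdag⟩
  haveI htrans : IsTrans V (Relation.TransGen (fun j k => j ∈ S.nbr k)) :=
    ⟨fun _ _ _ => Relation.TransGen.trans⟩
  have hwf : WellFounded (fun j k : V => j ∈ S.nbr k) :=
    Subrelation.wf (fun h => Relation.TransGen.single h)
      (Finite.wellFounded_of_trans_of_irrefl (Relation.TransGen (fun j k => j ∈ S.nbr k)))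
  -- all strategies along the path are valid
  have hvalid : ∀ k, S.valid (ρ k) := by
    intro k
    induction k with
    | zero => exact hvalid0
    | succ k ih =>
      obtain ⟨i, a, hall, _, heq, _⟩ := hstep k
      intro j t hjt
      rw [heq] at hjt
      by_cases hji : j = i
      · subst hji; rw [Function.update_self] at hjt; exact hall t hjt
      · rw [Function.update_of_ne hji] at hjt; exact ih j t hjt
  -- every player's strategy eventually stabilizes
  have main : ∀ i : V, ∃ N, ∀ k, N ≤ k → ρ k i = ρ N i := by
    intro i
    induction i using WellFounded.induction hwf with
    | _ i IH =>
      choose N hN using fun j (hj : j ∈ S.nbr i) => IH j hj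
      set N0 : ℕ := (S.nbr i).attach.sup (fun j => N j.1 j.2) with hN0def
      -- neighbours are frozen after N0
      have hfrozen : ∀ j (hj : j ∈ S.nbr i), ∀ k, N0 ≤ k → ρ k j = ρ N0 j := by
        intro j hj k hk
        have hle : N j hj ≤ N0 := Finset.le_sup (f := fun j : {x // x ∈ S.nbr i} => N j.1 j.2) (Finset.mem_attach _ ⟨j, hj⟩)
        rw [hN j hj k (le_trans hle hk), hN j hj N0 hle]
      set g : ℕ → ℝ := fun k => S.payoff c0 (ρ k) i with hgdef
      -- one step: payoff of i doesn't decrease, and strictly increases if i moves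
      have hstep' : ∀ k, N0 ≤ k →
          g k ≤ g (k+1) ∧ (ρ (k+1) i ≠ ρ k i → g k < g (k+1)) := by
        intro k hk
        obtain ⟨i', a, hall, hane, heq, hlt⟩ := hstep k
        by_cases hii : i' = i
        · subst hii
          have hchange : ρ (k+1) i' ≠ ρ k i' := by
            rw [heq, Function.update_self]; exact hane
          exact ⟨le_of_lt hlt, fun _ => hlt⟩
        · have hsame : ρ (k+1) i = ρ k i := by
            rw [heq, Function.update_of_ne (Ne.symm hii)]
          have : g k = g (k+1) := by
            apply S.payoff_congr c0 i hsame.symm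
            intro j hj
            rw [hfrozen j hj k hk, hfrozen j hj (k+1) (le_trans hk (Nat.le_succ k))]
          exact ⟨le_of_eq this, fun hc => absurd hsame hc⟩
      have hmono : ∀ k₁ k₂, N0 ≤ k₁ → k₁ ≤ k₂ → g k₁ ≤ g k₂ := by
        intro k₁ k₂ h₁ h₂
        induction k₂, h₂ using Nat.le_induction with
        | base => exact le_refl _
        | succ n hn ih => exact le_trans ih (hstep' n (le_trans h₁ hn)).1
      -- the payoff takes finitely many values after N0
      set f : Option P → ℝ := fun a => S.payoff c0 (Function.update (ρ N0) i a) i with hfdef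
      have hgf : ∀ k, N0 ≤ k → g k = f (ρ k i) := by
        intro k hk
        apply S.payoff_congr c0 i
        · rw [Function.update_self]
        · intro j hj
          have hji : j ≠ i := fun h => S.no_self i (h ▸ hj)
          rw [Function.update_of_ne hji, hfrozen j hj k hk]
      set A : Finset (Option P) := insert none ((S.prod i).image some) with hAdef
      have hmemA : ∀ k, ρ k i ∈ A := by
        intro k
        cases hki : ρ k i with
        | none => exact Finset.mem_insert_self _ _
        | some t =>
          exact Finset.mem_insert_of_mem
            (Finset.mem_image_of_mem some (hvalid k i t hki))
      have hsub : (g '' {k | N0 ≤ k}) ⊆ ↑(A.image f) := by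
        rintro x ⟨k, hk, rfl⟩
        simp only [Finset.coe_image, Set.mem_image, Finset.mem_coe]
        exact ⟨ρ k i, hmemA k, (hgf k hk).symm⟩
      have hfin : (g '' {k | N0 ≤ k}).Finite := Set.Finite.subset (A.image f).finite_toSet hsub
      have hne : (g '' {k | N0 ≤ k}).Nonempty := ⟨g N0, ⟨N0, le_refl N0, rfl⟩⟩
      obtain ⟨x, hx, hxmax⟩ := Set.Finite.exists_maximalFor id _ hfin hne
      obtain ⟨M, hM, rfl⟩ := hx
      -- after M the payoff is constant, hence i never moves again
      have hconst : ∀ k, M ≤ k → g k = g M := by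
        intro k hk
        have h1 : g M ≤ g k := hmono M k hM hk
        have h2 : g k ∈ g '' {k | N0 ≤ k} := ⟨k, Set.mem_setOf.mpr (le_trans hM hk), rfl⟩
        have := hxmax h2 h1
        exact le_antisymm this h1
      refine ⟨M, ?_⟩
      intro k hk
      induction k, hk using Nat.le_induction with
      | base => rfl
      | succ n hn ih =>
        rw [← ih]
        by_contra hc
        have := (hstep' n (le_trans hM hn)).2 hc
        rw [hconst n hn, hconst (n+1) (le_trans hn (Nat.le_succ n))] at this
        exact lt_irrefl _ this
  -- contradiction: take the max stabilization time; the step there changes nobody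
  choose Ni hNi using main
  set N : ℕ := Finset.univ.sup Ni with hNdef
  obtain ⟨i, a, hall, hane, heq, hlt⟩ := hstep N
  have hle : Ni i ≤ N := Finset.le_sup (Finset.mem_univ i)
  have h1 : ρ (N+1) i = ρ N i := by
    rw [hNi i (N+1) (le_trans hle (Nat.le_succ N)), hNi i N hle]
  rw [heq, Function.update_self] at h1
  exact hane h1
end

section
/- Every two-player social network game has the finite improvement property. -/
open Finset

variable {V P : Type} [Fintype V] [DecidableEq V] [DecidableEq P]

/-- The opponent of a player in a two-player game. -/
def opp : Fin 2 → Fin 2 := fun i => if i = 0 then 1 else 0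

lemma nbr_cases (S : SN (Fin 2) P) (i : Fin 2) :
    S.nbr i = ∅ ∨ S.nbr i = {opp i} := by
  have hsub : S.nbr i ⊆ {opp i} := by
    intro x hx
    have hxne : x ≠ i := fun h => S.no_self i (h ▸ hx)
    simp only [Finset.mem_singleton]
    rcases (show i = 0 ∨ i = 1 by omega) with rfl | rfl <;>
      rcases (show x = 0 ∨ x = 1 by omega) with rfl | rfl <;> simp_all [opp]
  exact Finset.subset_singleton_iff.mp hsub

/-- Payoff of a "type A" player as a function of his own strategy only. -/
noncomputable def gA (S : SN (Fin 2) P) (c0 : ℝ) (i : Fin 2) : Option P → ℝ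
  | none => 0
  | some t => if S.nbr i = ∅ then c0 else -S.θ i t

/-- The threshold value of a strategy (0 for the null strategy). -/
def thv (S : SN (Fin 2) P) (i : Fin 2) : Option P → ℝ
  | none => 0
  | some t => S.θ i t

/-- Indicator that the two players adopted the same product. -/
noncomputable def mInd (s : Fin 2 → Option P) : ℝ :=
  if s 0 = s 1 ∧ s 0 ≠ none then 1 else 0

/-- A player whose payoff depends only on his own strategy. -/
def typeA (S : SN (Fin 2) P) (i : Fin 2) : Prop :=
  S.nbr i = ∅ ∨ S.w (opp i) i = 0

open Classical in
noncomputable def pot1 (S : SN (Fin 2) P) (c0 : ℝ) (i : Fin 2) (a : Option P) : ℝ :=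
  if typeA S i then gA S c0 i a else 0

open Classical in
noncomputable def pot2 (S : SN (Fin 2) P) (i : Fin 2) (a : Option P) : ℝ :=
  if typeA S i then 0 else thv S i a / S.w (opp i) i

noncomputable def F1 (S : SN (Fin 2) P) (c0 : ℝ) (s : Fin 2 → Option P) : ℝ :=
  pot1 S c0 0 (s 0) + pot1 S c0 1 (s 1)

noncomputable def F2 (S : SN (Fin 2) P) (s : Fin 2 → Option P) : ℝ :=
  mInd s - (pot2 S 0 (s 0) + pot2 S 1 (s 1))

lemma payoffA (S : SN (Fin 2) P) (c0 : ℝ) {i : Fin 2} (hA : typeA S i)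
    (s : Fin 2 → Option P) : S.payoff c0 s i = gA S c0 i (s i) := by
  cases h : s i with
  | none => simp [SN.payoff, gA, h]
  | some t =>
    by_cases hn : S.nbr i = ∅
    · simp [SN.payoff, gA, h, hn]
    · have hw : S.w (opp i) i = 0 := hA.resolve_left hn
      have hnbr : S.nbr i = {opp i} := (nbr_cases S i).resolve_left hn
      have hz : ∑ j ∈ (S.nbr i).filter (fun j => s j = some t), S.w j i = 0 := by
        apply Finset.sum_eq_zero
        intro j hj
        have hj' := (Finset.mem_filter.mp hj).1
        rw [hnbr, Finset.mem_singleton] at hj'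
        rw [hj', hw]
      simp [SN.payoff, gA, h, hn, hz]

lemma mInd_none {s : Fin 2 → Option P} {i : Fin 2} (h : s i = none) : mInd s = 0 := by
  unfold mInd
  rw [if_neg]
  rintro ⟨h01, hnn⟩
  rcases (show i = 0 ∨ i = 1 by omega) with rfl | rfl <;> simp_all

lemma payoffB (S : SN (Fin 2) P) (c0 : ℝ) {i : Fin 2}
    (hn : S.nbr i = {opp i}) (s : Fin 2 → Option P) :
    S.payoff c0 s i = S.w (opp i) i * mInd s - thv S i (s i) := by
  have hne : S.nbr i ≠ ∅ := by simp [hn]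
  cases h : s i with
  | none => simp [SN.payoff, h, thv, mInd_none h]
  | some t =>
    have hm : mInd s = if s (opp i) = some t then 1 else 0 := by
      unfold mInd
      rcases (show i = 0 ∨ i = 1 by omega) with rfl | rfl
      · by_cases h1 : s (opp 0) = some t <;> simp_all [opp, eq_comm]
      · by_cases h1 : s (opp 1) = some t <;> simp_all [opp, eq_comm]
    simp only [SN.payoff, h, if_neg hne, hn, Finset.filter_singleton, thv, hm]
    by_cases h1 : s (opp i) = some t <;> simp [h1]

lemma step_lex (S : SN (Fin 2) P) (c0 : ℝ) {s s' : Fin 2 → Option P}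
    (h : S.ImpStep c0 s s') :
    F1 S c0 s < F1 S c0 s' ∨ (F1 S c0 s = F1 S c0 s' ∧ F2 S s < F2 S s') := by
  obtain ⟨i, a, -, -, rfl, hlt⟩ := h
  by_cases hA : typeA S i
  · left
    rw [payoffA S c0 hA, payoffA S c0 hA] at hlt
    rcases (show i = 0 ∨ i = 1 by omega) with rfl | rfl <;>
    · simp only [Function.update_self] at hlt
      simp only [F1, pot1, if_pos hA, Function.update_self,
        Function.update_of_ne (by decide : (1 : Fin 2) ≠ 0),
        Function.update_of_ne (by decide : (0 : Fin 2) ≠ 1)]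
      linarith
  · right
    have hA' := hA
    simp only [typeA, not_or] at hA'
    obtain ⟨hn0, hw0⟩ := hA'
    have hn : S.nbr i = {opp i} := (nbr_cases S i).resolve_left hn0
    have hw : 0 < S.w (opp i) i := (S.w_nonneg _ _).lt_of_ne (Ne.symm hw0)
    rw [payoffB S c0 hn, payoffB S c0 hn] at hlt
    simp only [Function.update_self] at hlt
    have h2 := (div_lt_div_iff_of_pos_right hw).mpr hlt
    rw [sub_div, sub_div, mul_div_cancel_left₀ _ (ne_of_gt hw),
      mul_div_cancel_left₀ _ (ne_of_gt hw)] at h2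
    rcases (show i = 0 ∨ i = 1 by omega) with rfl | rfl <;>
      refine ⟨?_, ?_⟩ <;>
      simp only [F1, F2, pot1, pot2, if_neg hA, Function.update_self,
        Function.update_of_ne (by decide : (1 : Fin 2) ≠ 0),
        Function.update_of_ne (by decide : (0 : Fin 2) ≠ 1)] <;>
      linarith

/-- every two-player social network game has the finite improvement
property. -/
theorem fip_of_two_players (S : SN (Fin 2) P) (c0 : ℝ) (hc0 : 0 < c0) :
    S.FIP c0 := by
  rintro ⟨ρ, hval0, hstep⟩
  -- every state along the path is valid
  have hvalk : ∀ k, S.valid (ρ k) := by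
    intro k
    induction k with
    | zero => exact hval0
    | succ n ih =>
      obtain ⟨i, a, hall, -, heq, -⟩ := hstep n
      rw [heq]
      intro j t hjt
      rcases eq_or_ne j i with rfl | hji
      · rw [Function.update_self] at hjt; exact hall t hjt
      · rw [Function.update_of_ne hji] at hjt; exact ih j t hjt
  -- states live in a finite set
  have hmem : ∀ k i, ρ k i ∈ insert (none : Option P) ((S.prod i).image some) := by
    intro k i
    cases h : ρ k i with
    | none => exact Finset.mem_insert_self _ _
    | some t =>
      exact Finset.mem_insert.mpr
        (Or.inr (Finset.mem_image.mpr ⟨t, hvalk k i t h, rfl⟩))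
  -- pigeonhole: some state repeats
  let A : Fin 2 → Finset (Option P) := fun i => insert none ((S.prod i).image some)
  let g : ℕ → {x : Option P × Option P // x ∈ A 0 ×ˢ A 1} :=
    fun k => ⟨(ρ k 0, ρ k 1), Finset.mem_product.mpr ⟨hmem k 0, hmem k 1⟩⟩
  obtain ⟨k, m, hkm, hge⟩ := Finite.exists_ne_map_eq_of_infinite g
  have hrep : ρ k = ρ m := by
    have hv : ((ρ k 0, ρ k 1) : Option P × Option P) = (ρ m 0, ρ m 1) :=
      congrArg Subtype.val hge
    funext x
    fin_cases x
    · exact congrArg Prod.fst hv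
    · exact congrArg Prod.snd hv
  -- the lexicographic potential strictly increases along the path
  have chain : ∀ a b : ℕ, a < b →
      F1 S c0 (ρ a) < F1 S c0 (ρ b) ∨
        (F1 S c0 (ρ a) = F1 S c0 (ρ b) ∧ F2 S (ρ a) < F2 S (ρ b)) := by
    intro a b hab
    induction b with
    | zero => omega
    | succ n ih =>
      have hstepn := step_lex S c0 (hstep n)
      rcases Nat.lt_succ_iff_lt_or_eq.mp hab with h | h
      · rcases ih h with h1 | ⟨h1, h2⟩ <;> rcases hstepn with g1 | ⟨g1, g2⟩
        · left; linarith
        · left; linarith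
        · left; linarith
        · exact Or.inr ⟨h1.trans g1, by linarith⟩
      · subst h; exact hstepn
  rcases (Nat.lt_or_gt_of_ne hkm) with h | h
  · rcases chain k m h with h1 | ⟨-, h2⟩
    · rw [hrep] at h1; exact lt_irrefl _ h1
    · rw [hrep] at h2; exact lt_irrefl _ h2
  · rcases chain m k h with h1 | ⟨-, h2⟩
    · rw [hrep] at h1; exact lt_irrefl _ h1
    · rw [hrep] at h2; exact lt_irrefl _ h2
end

section
/- Let S be a social network whose underlying graph has no source nodes, and let s ≠ (t_0,...,t_0) be a Nash equilibrium of the associated game. Then for every product t adopted by some player in s and every agent i with s_i = t, there exists a self-sustaining strongly connected subgraph C_t contained in {j : s_j = t} and a node j ∈ C_t with a path from j to i. -/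
open Finset

variable {V P : Type} [Fintype V] [DecidableEq V] [DecidableEq P]

/-- `C` is a self-sustaining strongly connected subgraph (SCS) for product `t`:
it is nonempty, strongly connected (as an induced subgraph), every node in it
has `t` available, and every node in it receives accumulated weight at least its
threshold from its neighbours inside `C`. -/
def SN.SelfSust (S : SN V P) (t : P) (C : Finset V) : Prop :=
  C.Nonempty ∧
  (∀ i ∈ C, ∀ j ∈ C,
      Relation.ReflTransGen (fun a b => a ∈ C ∧ b ∈ C ∧ a ∈ S.nbr b) i j) ∧
  ∀ i ∈ C, t ∈ S.prod i ∧ S.θ i t ≤ ∑ j ∈ S.nbr i ∩ C, S.w j i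

/-- in a network with no source nodes, if `s` is a non-trivial Nash
equilibrium, then for every product `t` and every agent `i` with `s i = t` there
is a self-sustaining SCS `C` for `t` contained in `{j | s j = t}` and a node
`j ∈ C` with a path from `j` to `i` in the underlying graph. -/
theorem NE_structure_of_no_source (S : SN V P) (c0 : ℝ) (hc0 : 0 < c0)
    (hns : ∀ i, ¬ S.isSource i) (s : V → Option P)
    (hs : S.NE c0 s) (hnt : s ≠ fun _ => none) :
    ∀ (t : P) (i : V), s i = some t →
      ∃ C : Finset V, S.SelfSust t C ∧ (∀ j ∈ C, s j = some t) ∧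
        ∃ j ∈ C, Relation.ReflTransGen (fun a b => a ∈ S.nbr b) j i := by
  classical
  intro t i hi
  set A : Finset V := Finset.univ.filter (fun j => s j = some t) with hA
  -- every adopter of t receives total weight ≥ threshold from adopting neighbours
  have key : ∀ k, s k = some t →
      S.θ k t ≤ ∑ j ∈ (S.nbr k).filter (fun j => s j = some t), S.w j k := by
    intro k hk
    have hne : ¬ S.nbr k = ∅ := hns k
    have hle := hs.2 k none (by intro t' h; simp at h)
    have h0 : S.payoff c0 (Function.update s k none) k = 0 := by
      simp [SN.payoff]
    have h1 : S.payoff c0 s k =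
        (∑ j ∈ (S.nbr k).filter (fun j => s j = some t), S.w j k) - S.θ k t := by
      simp only [SN.payoff, hk, if_neg hne]
    rw [h0, h1] at hle
    linarith
  -- edge relation within A
  set r : V → V → Prop := fun a b => a ∈ A ∧ b ∈ A ∧ a ∈ S.nbr b with hr
  set R : V → V → Prop := Relation.ReflTransGen r with hR
  set Anc : V → Finset V := fun x => Finset.univ.filter (fun k => R k x) with hAnc
  have anc_mono : ∀ a b, R a b → Anc a ⊆ Anc b := by
    intro a b hab k hk
    simp only [hAnc, Finset.mem_filter, Finset.mem_univ, true_and] at hk ⊢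
    exact hk.trans hab
  set T : Finset V := A.filter (fun k => R k i) with hT
  have hiT : i ∈ T := by
    simp only [hT, hA, Finset.mem_filter, Finset.mem_univ, true_and]
    exact ⟨hi, Relation.ReflTransGen.refl⟩
  obtain ⟨j, hjT, hjmin⟩ := T.exists_min_image (fun k => (Anc k).card) ⟨i, hiT⟩
  obtain ⟨hjA, hji⟩ := Finset.mem_filter.mp hjT
  set C : Finset V := Anc j with hC
  have memC : ∀ k, k ∈ C ↔ R k j := by
    intro k; simp [hC, hAnc]
  have hjC : j ∈ C := (memC j).mpr Relation.ReflTransGen.refl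
  have hCA : ∀ k ∈ C, k ∈ A := by
    intro k hk
    rcases Relation.ReflTransGen.cases_head ((memC k).mp hk) with h | ⟨m, hm, _⟩
    · exact h ▸ hjA
    · exact hm.1
  have hCadopt : ∀ k ∈ C, s k = some t := by
    intro k hk
    have := hCA k hk
    simpa [hA] using this
  -- closure under in-neighbours from A
  have hclosed : ∀ k ∈ C, ∀ m ∈ A, m ∈ S.nbr k → m ∈ C := by
    intro k hk m hm hnbr
    exact (memC m).mpr (Relation.ReflTransGen.head ⟨hm, hCA k hk, hnbr⟩ ((memC k).mp hk))
  -- minimality: for b ∈ C, R j b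
  have hback : ∀ b ∈ C, R j b := by
    intro b hb
    have hbj : R b j := (memC b).mp hb
    have hbT : b ∈ T := by
      refine Finset.mem_filter.mpr ⟨hCA b hb, hbj.trans hji⟩
    have hsub : Anc b ⊆ Anc j := anc_mono b j hbj
    have hcard := hjmin b hbT
    have heq : Anc b = Anc j := Finset.eq_of_subset_of_card_le hsub hcard
    have : j ∈ Anc b := heq ▸ hjC
    simpa [hAnc] using this
  -- restriction of paths ending at j to C
  have restrict : ∀ a b, Relation.ReflTransGen r a b → R b j →
      Relation.ReflTransGen (fun x y => x ∈ C ∧ y ∈ C ∧ x ∈ S.nbr y) a b := by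
    intro a b h
    induction h with
    | refl => intro _; exact Relation.ReflTransGen.refl
    | tail h1 h2 ih =>
      intro hcj
      have hbj : R _ j := (Relation.ReflTransGen.single h2).trans hcj
      exact (ih hbj).tail ⟨(memC _).mpr hbj, (memC _).mpr hcj, h2.2.2⟩
  refine ⟨C, ⟨⟨j, hjC⟩, ?_, ?_⟩, hCadopt, j, hjC, ?_⟩
  · intro a ha b hb
    have hab : R a b := ((memC a).mp ha).trans (hback b hb)
    exact restrict a b hab ((memC b).mp hb)
  · intro k hk
    have hkt := hCadopt k hk
    refine ⟨hs.1 k t hkt, ?_⟩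
    have h1 := key k hkt
    have hsub : (S.nbr k).filter (fun j => s j = some t) ⊆ S.nbr k ∩ C := by
      intro m hm
      rw [Finset.mem_filter] at hm
      refine Finset.mem_inter.mpr ⟨hm.1, hclosed k hk m ?_ hm.1⟩
      simp [hA, hm.2]
    calc S.θ k t ≤ ∑ j ∈ (S.nbr k).filter (fun j => s j = some t), S.w j k := h1
      _ ≤ ∑ j ∈ S.nbr k ∩ C, S.w j k :=
        Finset.sum_le_sum_of_subset_of_nonneg hsub (fun m _ _ => S.w_nonneg m k)
  · exact Relation.ReflTransGen.mono (fun a b h => h.2.2) _ _ hji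
end

section
/- Let S be a social network whose underlying graph has no source nodes. The all-t_0 joint strategy is the unique Nash equilibrium of the associated game if and only if there exists no product t with a self-sustaining strongly connected subgraph for t in the graph. -/
open Finset

variable {V P : Type} [Fintype V] [DecidableEq V] [DecidableEq P]

private lemma payoff_some' (S : SN V P) (c0 : ℝ) (s : V → Option P) (i : V) (t : P)
    (h : s i = some t) :
    S.payoff c0 s i = if S.nbr i = ∅ then c0
      else (∑ j ∈ (S.nbr i).filter (fun j => s j = some t), S.w j i) - S.θ i t := by
  simp [SN.payoff, h]

private lemma payoff_none' (S : SN V P) (c0 : ℝ) (s : V → Option P) (i : V)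
    (h : s i = none) : S.payoff c0 s i = 0 := by
  simp [SN.payoff, h]

private lemma filter_update' (S : SN V P) (s : V → Option P) (i : V) (a : Option P) (t : P) :
    (S.nbr i).filter (fun j => Function.update s i a j = some t)
      = (S.nbr i).filter (fun j => s j = some t) := by
  apply Finset.filter_congr
  intro j hj
  have hne : j ≠ i := fun h => S.no_self i (h ▸ hj)
  simp [Function.update_of_ne hne]

private lemma payoff_update_none' (S : SN V P) (c0 : ℝ) (s : V → Option P) (i : V) :
    S.payoff c0 (Function.update s i none) i = 0 :=
  payoff_none' S c0 _ i (Function.update_self i none s)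

private lemma payoff_update_some' (S : SN V P) (c0 : ℝ) (s : V → Option P) (i : V) (t : P) :
    S.payoff c0 (Function.update s i (some t)) i
      = if S.nbr i = ∅ then c0
        else (∑ j ∈ (S.nbr i).filter (fun j => s j = some t), S.w j i) - S.θ i t := by
  rw [payoff_some' S c0 _ i t (Function.update_self i (some t) s), filter_update']

private lemma nbr_ne' (S : SN V P) (hns : ∀ i, ¬ S.isSource i) (i : V) :
    ¬ (S.nbr i = ∅) := hns i

private lemma sum_mono' (S : SN V P) (i : V) {A B : Finset V} (h : A ⊆ B) :
    ∑ j ∈ S.nbr i ∩ A, S.w j i ≤ ∑ j ∈ S.nbr i ∩ B, S.w j i :=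
  Finset.sum_le_sum_of_subset_of_nonneg
    (Finset.inter_subset_inter (Finset.Subset.refl _) h)
    (fun j _ _ => S.w_nonneg j i)

/-- for a network with no source nodes, the all-`t₀` joint strategy
is the unique Nash equilibrium iff there is no product `t` with a
self-sustaining SCS for `t` in the underlying graph. -/
theorem trivial_unique_NE_iff_no_selfSust (S : SN V P) (c0 : ℝ) (hc0 : 0 < c0)
    (hns : ∀ i, ¬ S.isSource i) :
    (S.NE c0 (fun _ => none) ∧ ∀ s, S.NE c0 s → s = fun _ => none) ↔
      ¬ ∃ (t : P) (C : Finset V), S.SelfSust t C := by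
    classical
  constructor
  · rintro ⟨-, huniq⟩
    rintro ⟨t, C, hCne, -, hC⟩
    set Q : Finset V → Prop :=
      fun A => ∀ i ∈ A, t ∈ S.prod i ∧ S.θ i t ≤ ∑ j ∈ S.nbr i ∩ A, S.w j i with hQdef
    set D : Finset V := (Finset.univ.powerset.filter Q).sup id with hDdef
    have hsub : ∀ A, Q A → A ⊆ D := by
      intro A hA
      exact Finset.le_sup (f := id) (Finset.mem_filter.mpr
        ⟨Finset.mem_powerset.mpr (Finset.subset_univ A), hA⟩)
    have hQD : Q D := by
      intro i hi
      obtain ⟨A, hA, hiA⟩ := Finset.mem_sup.mp hi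
      have hQA : Q A := (Finset.mem_filter.mp hA).2
      obtain ⟨h1, h2⟩ := hQA i hiA
      exact ⟨h1, h2.trans (sum_mono' S i (hsub A hQA))⟩
    have hmax : ∀ i, t ∈ S.prod i → S.θ i t ≤ ∑ j ∈ S.nbr i ∩ D, S.w j i → i ∈ D := by
      intro i h1 h2
      have hQi : Q (insert i D) := by
        intro j hj
        rcases Finset.mem_insert.mp hj with rfl | hj
        · exact ⟨h1, h2.trans (sum_mono' S j (Finset.subset_insert _ _))⟩
        · obtain ⟨a, b⟩ := hQD j hj
          exact ⟨a, b.trans (sum_mono' S j (Finset.subset_insert _ _))⟩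
      exact hsub _ hQi (Finset.mem_insert_self i D)
    set s : V → Option P := fun j => if j ∈ D then some t else none with hsdef
    have hCD : C ⊆ D := hsub C hC
    have hfil : ∀ i, (S.nbr i).filter (fun j => s j = some t) = S.nbr i ∩ D := by
      intro i
      ext j
      by_cases h : j ∈ D <;> simp [hsdef, h]
    have hfil' : ∀ i (t' : P), t' ≠ t →
        (S.nbr i).filter (fun j => s j = some t') = ∅ := by
      intro i t' ht'
      ext j
      simp only [Finset.mem_filter, Finset.notMem_empty, iff_false, not_and]
      intro _
      by_cases h : j ∈ D
      · simp only [hsdef, if_pos h, Option.some.injEq]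
        exact fun hh => ht' hh.symm
      · simp [hsdef, h]
    have hNE : S.NE c0 s := by
      constructor
      · intro i t' h
        by_cases hi : i ∈ D
        · rw [hsdef] at h
          simp only [if_pos hi, Option.some.injEq] at h
          exact h ▸ (hQD i hi).1
        · rw [hsdef] at h
          simp [if_neg hi] at h
      · intro i a ha
        by_cases hi : i ∈ D
        · have hsi : s i = some t := if_pos hi
          have hp : S.payoff c0 s i = (∑ j ∈ S.nbr i ∩ D, S.w j i) - S.θ i t := by
            rw [payoff_some' S c0 s i t hsi, if_neg (nbr_ne' S hns i), hfil i]
          have h0 : 0 ≤ S.payoff c0 s i := by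
            have := (hQD i hi).2
            rw [hp]; linarith
          match a with
          | none => rw [payoff_update_none']; exact h0
          | some t' =>
            rw [payoff_update_some', if_neg (nbr_ne' S hns i)]
            by_cases ht' : t' = t
            · subst ht'
              rw [hfil i, ← hp]
            · rw [hfil' i t' ht', Finset.sum_empty]
              have := S.θ_pos i t'
              linarith
        · have hsi : s i = none := if_neg hi
          rw [payoff_none' S c0 s i hsi]
          match a with
          | none => rw [payoff_update_none']
          | some t' =>
            rw [payoff_update_some', if_neg (nbr_ne' S hns i)]
            by_cases ht' : t' = t
            · subst ht'
              rw [hfil i]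
              have hlt : ¬ S.θ i t' ≤ ∑ j ∈ S.nbr i ∩ D, S.w j i := by
                intro hle
                exact hi (hmax i (ha t' rfl) hle)
              push_neg at hlt
              linarith
            · rw [hfil' i t' ht', Finset.sum_empty]
              have := S.θ_pos i t'
              linarith
    have heq := huniq s hNE
    obtain ⟨i, hiC⟩ := hCne
    have : s i = none := congrFun heq i
    rw [hsdef] at this
    simp [hCD hiC] at this
  · intro hno
    constructor
    · constructor
      · intro i t h
        simp at h
      · intro i a ha
        rw [payoff_none' S c0 (fun _ => none) i rfl]
        match a with
        | none => rw [payoff_update_none']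
        | some t =>
          rw [payoff_update_some', if_neg (nbr_ne' S hns i)]
          have hfe : (S.nbr i).filter (fun j => (fun (_ : V) => (none : Option P)) j = some t) = ∅ := by
            simp
          rw [hfe, Finset.sum_empty]
          have := S.θ_pos i t
          linarith
    · intro s hsNE
      by_contra hne
      have hex : ∃ i t, s i = some t := by
        by_contra h
        push_neg at h
        apply hne
        funext i
        cases h' : s i with
        | none => rfl
        | some t => exact absurd h' (h i t)
      obtain ⟨i0, t, hi0⟩ := hex
      set Ct : Finset V := Finset.univ.filter (fun j => s j = some t) with hCtdef
      have hmem : ∀ j, j ∈ Ct ↔ s j = some t := by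
        intro j; simp [hCtdef]
      have hkey : ∀ i ∈ Ct, t ∈ S.prod i ∧ S.θ i t ≤ ∑ j ∈ S.nbr i ∩ Ct, S.w j i := by
        intro i hi
        have hsi := (hmem i).mp hi
        refine ⟨hsNE.1 i t hsi, ?_⟩
        have hdev := hsNE.2 i none (by intro t' h; cases h)
        rw [payoff_update_none', payoff_some' S c0 s i t hsi, if_neg (nbr_ne' S hns i)] at hdev
        have hfe : (S.nbr i).filter (fun j => s j = some t) = S.nbr i ∩ Ct := by
          ext j
          simp [hCtdef, Finset.mem_inter, Finset.mem_filter, and_comm]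
        rw [hfe] at hdev
        linarith
      set F := Ct.powerset.filter (fun A => A.Nonempty ∧ ∀ i ∈ A, S.nbr i ∩ Ct ⊆ A) with hFdef
      have hCtF : Ct ∈ F := by
        refine Finset.mem_filter.mpr ⟨Finset.mem_powerset.mpr (Finset.Subset.refl _),
          ⟨i0, (hmem i0).mpr hi0⟩, ?_⟩
        intro i _
        exact Finset.inter_subset_right
      obtain ⟨D, hDF, hDmin⟩ := Finset.exists_min_image F Finset.card ⟨Ct, hCtF⟩
      have hDm := Finset.mem_filter.mp hDF
      have hDsub : D ⊆ Ct := Finset.mem_powerset.mp hDm.1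
      have hDne : D.Nonempty := hDm.2.1
      have hDcl : ∀ i ∈ D, S.nbr i ∩ Ct ⊆ D := hDm.2.2
      have hinter : ∀ i ∈ D, S.nbr i ∩ Ct = S.nbr i ∩ D := by
        intro i hi
        apply Finset.Subset.antisymm
        · intro j hj
          exact Finset.mem_inter.mpr ⟨(Finset.mem_inter.mp hj).1, hDcl i hi hj⟩
        · exact Finset.inter_subset_inter (Finset.Subset.refl _) hDsub
      apply hno
      refine ⟨t, D, hDne, ?_, ?_⟩
      · intro i hi j hj
        set anc := D.filter (fun a =>
          Relation.ReflTransGen (fun a b => a ∈ D ∧ b ∈ D ∧ a ∈ S.nbr b) a j) with hancdef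
        have hancF : anc ∈ F := by
          refine Finset.mem_filter.mpr ⟨Finset.mem_powerset.mpr
            ((Finset.filter_subset _ _).trans hDsub),
            ⟨j, Finset.mem_filter.mpr ⟨hj, Relation.ReflTransGen.refl⟩⟩, ?_⟩
          intro b hb a ha
          have hbm := Finset.mem_filter.mp hb
          have haD : a ∈ D := hDcl b hbm.1 ha
          exact Finset.mem_filter.mpr ⟨haD,
            Relation.ReflTransGen.head ⟨haD, hbm.1, (Finset.mem_inter.mp ha).1⟩ hbm.2⟩
        have hancD : anc = D :=
          Finset.eq_of_subset_of_card_le (Finset.filter_subset _ _) (hDmin anc hancF)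
        have hiANC : i ∈ anc := hancD ▸ hi
        exact (Finset.mem_filter.mp hiANC).2
      · intro i hi
        obtain ⟨h1, h2⟩ := hkey i (hDsub hi)
        exact ⟨h1, by rw [← hinter i hi]; exact h2⟩
end

section
/- Let S be a social network with no source nodes, t a product, and C_t a self-sustaining SCS for t. Define R as the least set containing C_t and closed under adding any node j with t ∈ P(j) whose accumulated incoming weight from R is at least θ(j,t). Then the joint strategy assigning t to all nodes in R and t_0 to all other nodes is a (non-trivial) Nash equilibrium of the associated game. -/
open Finset

variable {V P : Type} [Fintype V] [DecidableEq V] [DecidableEq P]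

open scoped Classical in
/-- `R`: the least set of nodes containing `C` and closed under adding any node
`j` with `t ∈ P(j)` whose accumulated incoming weight from the set is at least
`θ(j,t)`. -/
noncomputable def SN.spread (S : SN V P) (t : P) (C : Finset V) : Set V :=
  ⋂₀ {A : Set V | ↑C ⊆ A ∧
      ∀ j, t ∈ S.prod j →
        S.θ j t ≤ ∑ k ∈ (S.nbr j).filter (fun k => k ∈ A), S.w k j → j ∈ A}

open scoped Classical

lemma subset_spread_aux (S : SN V P) (t : P) (C : Finset V) (A : Set V)
    (h1 : ↑C ⊆ A)
    (h2 : ∀ j, t ∈ S.prod j →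
        S.θ j t ≤ ∑ k ∈ (S.nbr j).filter (fun k => k ∈ A), S.w k j → j ∈ A) :
    S.spread t C ⊆ A :=
  Set.sInter_subset_of_mem ⟨h1, h2⟩

lemma coe_C_subset_spread (S : SN V P) (t : P) (C : Finset V) :
    ↑C ⊆ S.spread t C := by
  intro x hx
  intro A hA
  exact hA.1 hx

lemma spread_closed (S : SN V P) (t : P) (C : Finset V) :
    ∀ j, t ∈ S.prod j →
      S.θ j t ≤ ∑ k ∈ (S.nbr j).filter (fun k => k ∈ S.spread t C), S.w k j →
      j ∈ S.spread t C := by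
  intro j hj hle A hA
  refine hA.2 j hj (le_trans hle ?_)
  refine Finset.sum_le_sum_of_subset_of_nonneg ?_ (fun k _ _ => S.w_nonneg k j)
  intro k hk
  simp only [Finset.mem_filter] at hk ⊢
  exact ⟨hk.1, hk.2 A hA⟩

lemma spread_prod (S : SN V P) (t : P) (C : Finset V) (hC : S.SelfSust t C) :
    ∀ i ∈ S.spread t C, t ∈ S.prod i := by
  intro i hi
  refine subset_spread_aux S t C {i | t ∈ S.prod i} ?_ (fun j hj _ => hj) hi
  intro x hx
  exact (hC.2.2 x hx).1

lemma spread_thresh (S : SN V P) (t : P) (C : Finset V) (hC : S.SelfSust t C) :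
    ∀ i ∈ S.spread t C,
      S.θ i t ≤ ∑ k ∈ (S.nbr i).filter (fun k => k ∈ S.spread t C), S.w k i := by
  set B : Set V := {j | S.θ j t ≤ ∑ k ∈ (S.nbr j).filter (fun k => k ∈ S.spread t C), S.w k j}
  have hsub : S.spread t C ⊆ S.spread t C ∩ B := by
    refine subset_spread_aux S t C _ ?_ ?_
    · intro x hx
      refine ⟨coe_C_subset_spread S t C hx, ?_⟩
      refine le_trans (hC.2.2 x hx).2 ?_
      refine Finset.sum_le_sum_of_subset_of_nonneg ?_ (fun k _ _ => S.w_nonneg k x)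
      intro k hk
      simp only [Finset.mem_inter] at hk
      simp only [Finset.mem_filter]
      exact ⟨hk.1, coe_C_subset_spread S t C hk.2⟩
    · intro j hj hle
      have hle' : S.θ j t ≤ ∑ k ∈ (S.nbr j).filter (fun k => k ∈ S.spread t C), S.w k j := by
        refine le_trans hle ?_
        refine Finset.sum_le_sum_of_subset_of_nonneg ?_ (fun k _ _ => S.w_nonneg k j)
        intro k hk
        simp only [Finset.mem_filter] at hk ⊢
        exact ⟨hk.1, hk.2.1⟩
      exact ⟨spread_closed S t C j hj hle', hle'⟩
  intro i hi
  exact (hsub hi).2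

open scoped Classical in
/-- given a network with no source nodes and a self-sustaining SCS
`C` for product `t`, the joint strategy assigning `t` to all nodes of `R` (the
least set containing `C` closed under threshold-exceeding adoption) and `t₀` to
all other nodes is a non-trivial Nash equilibrium. -/
theorem spread_NE (S : SN V P) (c0 : ℝ) (hc0 : 0 < c0)
    (hns : ∀ i, ¬ S.isSource i) (t : P) (C : Finset V) (hC : S.SelfSust t C) :
    S.NE c0 (fun i => if i ∈ S.spread t C then some t else none) ∧
      ∃ i, (if i ∈ S.spread t C then some t else (none : Option P)) ≠ none := by
  set R := S.spread t C with hR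
  set s : V → Option P := fun i => if i ∈ R then some t else none with hs
  have hsi : ∀ i, i ∈ R → s i = some t := fun i hi => if_pos hi
  have hsn : ∀ i, i ∉ R → s i = none := fun i hi => if_neg hi
  have hnbr : ∀ i, ¬ (S.nbr i = ∅) := fun i => hns i
  have hfilter : ∀ i, (S.nbr i).filter (fun j => s j = some t)
      = (S.nbr i).filter (fun j => j ∈ R) := by
    intro i
    apply Finset.filter_congr
    intro j _
    by_cases hj : j ∈ R <;> simp [hs, hj]
  have hfilter' : ∀ i t', t' ≠ t → (S.nbr i).filter (fun j => s j = some t') = ∅ := by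
    intro i t' ht'
    apply Finset.filter_false_of_mem
    intro j _
    by_cases hj : j ∈ R <;> simp [hs, hj, ht', Ne.symm ht']
  have hpay : ∀ i ∈ R, S.payoff c0 s i
      = (∑ j ∈ (S.nbr i).filter (fun j => j ∈ R), S.w j i) - S.θ i t := by
    intro i hi
    simp only [SN.payoff, hsi i hi, hfilter i, if_neg (hnbr i)]
  have hpos : ∀ i, 0 ≤ S.payoff c0 s i := by
    intro i
    by_cases hi : i ∈ R
    · rw [hpay i hi]
      have := spread_thresh S t C hC i hi
      linarith
    · simp [SN.payoff, hsn i hi]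
  refine ⟨⟨?_, ?_⟩, ?_⟩
  · -- valid
    intro i t' hit'
    by_cases hi : i ∈ R
    · rw [hsi i hi] at hit'
      obtain rfl : t = t' := by injection hit'
      exact spread_prod S t C hC i hi
    · rw [hsn i hi] at hit'
      exact absurd hit' (by simp)
  · -- Nash
    intro i a ha
    have hupd : ∀ t' : P, (S.nbr i).filter (fun j => Function.update s i a j = some t')
        = (S.nbr i).filter (fun j => s j = some t') := by
      intro t'
      apply Finset.filter_congr
      intro j hj
      have hji : j ≠ i := fun h => S.no_self i (h ▸ hj)
      simp [Function.update_of_ne hji]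
    match a, ha with
    | none, _ =>
      have : S.payoff c0 (Function.update s i none) i = 0 := by
        simp [SN.payoff, Function.update_self]
      rw [this]; exact hpos i
    | some t', ha =>
      have ht'p : t' ∈ S.prod i := ha t' rfl
      have hpay' : S.payoff c0 (Function.update s i (some t')) i
          = (∑ j ∈ (S.nbr i).filter (fun j => s j = some t'), S.w j i) - S.θ i t' := by
        simp only [SN.payoff, Function.update_self, if_neg (hnbr i), hupd t']
      by_cases ht' : t' = t
      · subst ht'
        by_cases hi : i ∈ R
        · rw [hpay', hfilter i, hpay i hi]
        · have hlt : ¬ S.θ i t' ≤ ∑ k ∈ (S.nbr i).filter (fun k => k ∈ R), S.w k i := by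
            intro hle
            exact hi (spread_closed S t' C i ht'p hle)
          rw [hpay', hfilter i]
          have := hpos i
          push_neg at hlt
          linarith
      · rw [hpay', hfilter' i t' ht']
        have := hpos i
        have := S.θ_pos i t'
        simp only [Finset.sum_empty]
        linarith
  · -- non-trivial
    obtain ⟨i, hi⟩ := hC.1
    have hiR : i ∈ R := coe_C_subset_spread S t C hi
    exact ⟨i, by simp [hiR]⟩
end

section
/- There exists a social network whose underlying graph is the 3-cycle 1→2→3→1 (with two products available to each node and thresholds below the edge weights) whose associated game admits an infinite improvement path; hence the game does not have the FIP. -/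
open Finset

variable {V P : Type} [Fintype V] [DecidableEq V] [DecidableEq P]

/-- The concrete social network on the 3-cycle. -/
noncomputable def cycSN : SN (Fin 3) (Fin 2) where
  nbr i := {i - 1}
  w _ _ := 1
  prod _ := Finset.univ
  θ _ _ := 1/2
  no_self i := by fin_cases i <;> decide
  w_nonneg _ _ := zero_le_one
  w_le_one _ _ := le_refl 1
  sum_w_le_one i _ := by simp
  prod_nonempty i := ⟨0, Finset.mem_univ _⟩
  θ_pos _ _ := by norm_num
  θ_le_one _ _ := by norm_num

/-- The six joint strategies of the improvement cycle. -/
def cycSeq : ℕ → (Fin 3 → Option (Fin 2))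
  | 0 => ![some 1, some 1, some 0]
  | 1 => ![some 0, some 1, some 0]
  | 2 => ![some 0, some 1, some 1]
  | 3 => ![some 0, some 0, some 1]
  | 4 => ![some 1, some 0, some 1]
  | _ => ![some 1, some 0, some 0]

lemma cycPayoff (s : Fin 3 → Option (Fin 2)) (i : Fin 3) (t : Fin 2) (h : s i = some t) :
    cycSN.payoff 1 s i = if s (i - 1) = some t then (1:ℝ)/2 else -(1/2) := by
  unfold SN.payoff cycSN
  rw [h]
  simp only
  rw [if_neg (by simp [Finset.eq_empty_iff_forall_notMem])]
  by_cases hp : s (i - 1) = some t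
  · rw [if_pos hp]
    rw [Finset.filter_singleton, if_pos hp]
    norm_num
  · rw [if_neg hp]
    rw [Finset.filter_singleton, if_neg hp]
    norm_num

lemma cycStep (m : ℕ) (hm : m < 6) :
    cycSN.ImpStep 1 (cycSeq m) (cycSeq ((m + 1) % 6)) := by
  interval_cases m
  · exact ⟨0, some 0, fun t ht => Finset.mem_univ _, by decide, by
      funext j; fin_cases j <;> rfl, by
      rw [cycPayoff _ 0 1 rfl, cycPayoff _ 0 0 rfl, if_neg (by decide), if_pos (by decide)]; norm_num⟩
  · exact ⟨2, some 1, fun t ht => Finset.mem_univ _, by decide, by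
      funext j; fin_cases j <;> rfl, by
      rw [cycPayoff _ 2 0 rfl, cycPayoff _ 2 1 rfl, if_neg (by decide), if_pos (by decide)]; norm_num⟩
  · exact ⟨1, some 0, fun t ht => Finset.mem_univ _, by decide, by
      funext j; fin_cases j <;> rfl, by
      rw [cycPayoff _ 1 1 rfl, cycPayoff _ 1 0 rfl, if_neg (by decide), if_pos (by decide)]; norm_num⟩
  · exact ⟨0, some 1, fun t ht => Finset.mem_univ _, by decide, by
      funext j; fin_cases j <;> rfl, by
      rw [cycPayoff _ 0 0 rfl, cycPayoff _ 0 1 rfl, if_neg (by decide), if_pos (by decide)]; norm_num⟩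
  · exact ⟨2, some 0, fun t ht => Finset.mem_univ _, by decide, by
      funext j; fin_cases j <;> rfl, by
      rw [cycPayoff _ 2 1 rfl, cycPayoff _ 2 0 rfl, if_neg (by decide), if_pos (by decide)]; norm_num⟩
  · exact ⟨1, some 1, fun t ht => Finset.mem_univ _, by decide, by
      funext j; fin_cases j <;> rfl, by
      rw [cycPayoff _ 1 0 rfl, cycPayoff _ 1 1 rfl, if_neg (by decide), if_pos (by decide)]; norm_num⟩

/-- there is a social network on the 3-cycle `0 → 1 → 2 → 0`, with
two products available to each node and thresholds below the corresponding edge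
weights, whose associated game admits an infinite improvement path; hence the
game does not have the FIP. -/
theorem exists_cycle_without_FIP :
    ∃ (S : SN (Fin 3) (Fin 2)) (c0 : ℝ), 0 < c0 ∧
      (∀ i, S.nbr i = {i - 1}) ∧
      (∀ i, S.prod i = Finset.univ) ∧
      (∀ i t, S.θ i t < S.w (i - 1) i) ∧
      (∃ ρ : ℕ → (Fin 3 → Option (Fin 2)),
        S.valid (ρ 0) ∧ ∀ k, S.ImpStep c0 (ρ k) (ρ (k + 1))) ∧
      ¬ S.FIP c0 := by
  refine ⟨cycSN, 1, one_pos, fun i => rfl, fun i => rfl, fun i t => by norm_num [cycSN], ?_, ?_⟩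
  · refine ⟨fun k => cycSeq (k % 6), fun i t _ => Finset.mem_univ _, fun k => ?_⟩
    show cycSN.ImpStep 1 (cycSeq (k % 6)) (cycSeq ((k + 1) % 6))
    rw [show (k + 1) % 6 = (k % 6 + 1) % 6 from by omega]
    exact cycStep (k % 6) (Nat.mod_lt _ (by norm_num))
  · intro hF
    exact hF ⟨fun k => cycSeq (k % 6), fun i t _ => Finset.mem_univ _, fun k => by
      show cycSN.ImpStep 1 (cycSeq (k % 6)) (cycSeq ((k + 1) % 6))
      rw [show (k + 1) % 6 = (k % 6 + 1) % 6 from by omega]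
      exact cycStep (k % 6) (Nat.mod_lt _ (by norm_num))⟩
end

section
/- The price of anarchy of social network games whose underlying graph is a simple cycle is unbounded: for every M > 0 there is such a game having a social optimum with positive social welfare and a Nash equilibrium (the all-t_0 strategy) with social welfare 0, so the ratio exceeds M (is infinite). -/
open Finset

variable {V P : Type} [Fintype V] [DecidableEq V] [DecidableEq P]

/-- Social welfare: the sum of the payoffs of all players. -/
def SN.SW (S : SN V P) (c0 : ℝ) (s : V → Option P) : ℝ :=
  ∑ i, S.payoff c0 s i

noncomputable def myS : SN (Fin 2) (Fin 1) where
  nbr := fun i => {i - 1}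
  w := fun _ _ => 1
  prod := fun _ => Finset.univ
  θ := fun _ _ => 1/2
  no_self := by decide
  w_nonneg := fun _ _ => zero_le_one
  w_le_one := fun _ _ => le_refl 1
  sum_w_le_one := by intro i _; rw [Finset.sum_singleton]
  prod_nonempty := fun _ => ⟨0, Finset.mem_univ 0⟩
  θ_pos := fun _ _ => by norm_num
  θ_le_one := fun _ _ => by norm_num

lemma myS_none : myS.SW 1 (fun _ => none) = 0 := by
  unfold SN.SW SN.payoff; simp

lemma myS_one : myS.SW 1 (fun _ => some 0) = 1 := by
  unfold SN.SW SN.payoff myS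
  simp only [Fin.sum_univ_two]
  norm_num [Finset.filter_true_of_mem, Finset.sum_singleton]

/-- the price of anarchy of social network games on simple cycles
is unbounded: for every `M > 0` there is such a game with a social optimum of
positive social welfare while the all-`t₀` profile is a Nash equilibrium of
social welfare `0`, so the ratio exceeds `M` (it is infinite). -/
theorem poa_unbounded_on_cycles :
    ∀ M : ℝ, 0 < M →
      ∃ (n : ℕ) (S : SN (Fin (n + 2)) (Fin 1)) (c0 : ℝ), 0 < c0 ∧
        (∀ i, S.nbr i = {i - 1}) ∧
        S.NE c0 (fun _ => none) ∧ S.SW c0 (fun _ => none) = 0 ∧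
        ∃ s, S.valid s ∧ (∀ s', S.valid s' → S.SW c0 s' ≤ S.SW c0 s) ∧
          0 < S.SW c0 s ∧ M * S.SW c0 (fun _ => none) < S.SW c0 s := by
  intro M hM
  refine ⟨0, myS, 1, one_pos, fun i => rfl, ?_, myS_none, ?_⟩
  · constructor
    · intro i t _; exact Finset.mem_univ t
    · intro i a _
      have h0 : myS.payoff 1 (fun _ => none) i = 0 := rfl
      rw [h0]
      cases a with
      | none => simp [SN.payoff]
      | some t =>
        have hup : Function.update (fun _ => none : Fin 2 → Option (Fin 1)) i (some t) i = some t :=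
          Function.update_self i _ _
        simp only [SN.payoff, hup]
        have hne : (myS.nbr i : Finset (Fin 2)) ≠ ∅ := by
          show ({i - 1} : Finset (Fin 2)) ≠ ∅; simp
        rw [if_neg hne]
        have hfe : Finset.filter (fun j => Function.update (fun _ => none : Fin 2 → Option (Fin 1)) i (some t) j = some t) (myS.nbr i) = ∅ := by
          apply Finset.filter_eq_empty_iff.mpr
          intro j hj
          have hji : j ≠ i := by
            have : j ∈ ({i - 1} : Finset (Fin 2)) := hj
            rcases Finset.mem_singleton.mp this with rfl
            have hall : ∀ k : Fin 2, k - 1 ≠ k := by decide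
            exact hall i
          rw [Function.update_of_ne hji]
          simp
        rw [hfe]
        have : myS.θ i t = 1/2 := rfl
        rw [Finset.sum_empty, this]
        norm_num
  · refine ⟨fun _ => some 0, fun _ _ _ => Finset.mem_univ _, ?_, ?_, ?_⟩
    · intro s' _
      rw [myS_one]
      have hb : ∀ i : Fin 2, myS.payoff 1 s' i ≤ 1/2 := by
        intro i
        cases hsi : s' i with
        | none => simp [SN.payoff, hsi]
        | some t =>
          simp only [SN.payoff, hsi]
          have hne : (myS.nbr i : Finset (Fin 2)) ≠ ∅ := by
            show ({i - 1} : Finset (Fin 2)) ≠ ∅; simp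
          rw [if_neg hne]
          have hsub : Finset.filter (fun j => s' j = some t) (myS.nbr i) ⊆ ({i - 1} : Finset (Fin 2)) :=
            Finset.filter_subset _ _
          have hw : ∀ j, myS.w j i = 1 := fun _ => rfl
          have hθ : myS.θ i t = 1/2 := rfl
          have hle : (∑ j ∈ Finset.filter (fun j => s' j = some t) (myS.nbr i), myS.w j i)
              ≤ ∑ j ∈ ({i - 1} : Finset (Fin 2)), (1:ℝ) := by
            simp only [hw]
            exact Finset.sum_le_sum_of_subset_of_nonneg hsub (fun _ _ _ => zero_le_one)
          rw [Finset.sum_singleton] at hle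
          rw [hθ]
          linarith
      calc myS.SW 1 s' = ∑ i, myS.payoff 1 s' i := rfl
        _ ≤ ∑ _i : Fin 2, (1:ℝ)/2 := Finset.sum_le_sum (fun i _ => hb i)
        _ = 1 := by rw [Fin.sum_univ_two]; norm_num
    · rw [myS_one]; norm_num
    · rw [myS_none, myS_one, mul_zero]; norm_num
end
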